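/- Let k ≥ 2, n ≥ 2, 1 ≤ p < ∞, and let Q be a positive definite integral form of degree k in n variables satisfying r(λ) ≤ C_1 λ^{n/k−1} for all integers λ ≥ 1. Let c > 0. There is a constant c' > 0, depending only on n, k, p, c and C_1 (not on q or Λ), with the following property: if q ≥ 1 is an integer and Λ is a finite set of positive integers with r(λ) > 0 for every λ ∈ Λ, such that for every b ∈ (ℤ/qℤ)^n there exists λ(b) ∈ Λ with #{x ∈ ℤ^n : Q(x) = λ(b) and x ≡ b (mod q)} ≥ c q^{−(n−1)} λ(b)^{n/k−1}, then for all sufficiently large integers T (depending on q and Λ) the indicator function f = 1_{(qℤ)^n ∩ [−T,T]^n} satisfies ‖ max_{λ ∈ Λ} A_λ f ‖_{ℓ^p(ℤ^n)} ≥ c' q^{n/p − (n−1)} ‖f‖_{ℓ^p(ℤ^n)}. In particular the ℓ^p(ℤ^n) operator norm of f ↦ max_{λ∈Λ} |A_λ f| is at least c' q^{n/p − (n−1)}. -/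

import Mathlib

open scoped ENNReal NNReal BigOperators

noncomputable section

/-- The discrete average over the level set `{x : Q x = lam}`. -/
def sphAvg (n : ℕ) (Q : (Fin n → ℤ) → ℤ) (lam : ℤ) (f : (Fin n → ℤ) → ℂ)
    (y : Fin n → ℤ) : ℂ :=
  (Nat.card {x : Fin n → ℤ // Q x = lam} : ℂ)⁻¹ *
    ∑' x : {x : Fin n → ℤ // Q x = lam}, f (y - x.val)

/-- The `ℓ^p(ℤ^n)` norm, valued in `ℝ≥0∞`. -/
def lpNormZ (n : ℕ) (p : ℝ) (f : (Fin n → ℤ) → ℂ) : ℝ≥0∞ :=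
  (∑' y : Fin n → ℤ, (‖f y‖₊ : ℝ≥0∞) ^ p) ^ (1 / p)

/-- The indicator function of `(qℤ)^n ∩ [-T,T]^n`. -/
def boxInd (n : ℕ) (q : ℕ) (T : ℕ) : (Fin n → ℤ) → ℂ := fun y =>
  if (∀ i, (q : ℤ) ∣ y i) ∧ (∀ i, |y i| ≤ (T : ℤ)) then 1 else 0

theorem stmt3 (n k : ℕ) (hk : 2 ≤ k) (hn : 2 ≤ n) (p : ℝ) (hp : 1 ≤ p)
    (c C₁ : ℝ) (hc : 0 < c) :
    ∃ c' : ℝ≥0, 0 < c' ∧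
      ∀ Q : MvPolynomial (Fin n) ℤ, Q.IsHomogeneous k →
        (∀ x : Fin n → ℤ, x ≠ 0 → 0 < MvPolynomial.eval x Q) →
        (∀ lam : ℕ, 1 ≤ lam →
          (Nat.card {x : Fin n → ℤ // MvPolynomial.eval x Q = (lam : ℤ)} : ℝ) ≤
            C₁ * (lam : ℝ) ^ ((n : ℝ) / k - 1)) →
        ∀ q : ℕ, 1 ≤ q → ∀ Λ : Finset ℕ,
          (∀ lam ∈ Λ, 0 < lam ∧
            0 < Nat.card {x : Fin n → ℤ // MvPolynomial.eval x Q = (lam : ℤ)}) →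
          (∀ b : Fin n → ZMod q, ∃ lam ∈ Λ,
            c * (q : ℝ) ^ (-((n : ℝ) - 1)) * (lam : ℝ) ^ ((n : ℝ) / k - 1) ≤
              (Nat.card {x : Fin n → ℤ // MvPolynomial.eval x Q = (lam : ℤ) ∧
                ∀ i, ((x i : ZMod q) = b i)} : ℝ)) →
          ∃ T₀ : ℕ, ∀ T : ℕ, T₀ ≤ T →
            (c' : ℝ≥0∞) * (q : ℝ≥0∞) ^ ((n : ℝ) / p - ((n : ℝ) - 1)) *
                lpNormZ n p (boxInd n q T) ≤
              (∑' y : Fin n → ℤ,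
                (⨆ lam ∈ Λ,
                  (‖sphAvg n (fun x => MvPolynomial.eval x Q) (lam : ℤ)
                      (boxInd n q T) y‖₊ : ℝ≥0∞)) ^ p) ^ (1 / p) := by
  classical
  have hppos : (0:ℝ) < p := lt_of_lt_of_le one_pos hp
  set C₂ : ℝ := max C₁ 1 with hC₂def
  have hC₂pos : (0:ℝ) < C₂ := lt_of_lt_of_le one_pos (le_max_right _ _)
  have hc'pos : (0:ℝ) < c / (C₂ * 3 ^ n) := div_pos hc (by positivity)
  refine ⟨(c / (C₂ * 3 ^ n)).toNNReal, Real.toNNReal_pos.mpr hc'pos, ?_⟩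
  intro Q hhom hposQ hcount q hq Λ hΛ hcover
  have hq0 : 0 < q := hq
  -- R : bound on the size of solutions
  have hfin : ∀ lam ∈ Λ, ({x : Fin n → ℤ | MvPolynomial.eval x Q = (lam:ℤ)}).Finite := by
    intro lam hlam
    have h2 := (hΛ lam hlam).2
    have : Finite {x : Fin n → ℤ // MvPolynomial.eval x Q = (lam:ℤ)} := (Nat.card_pos_iff.mp h2).2
    exact Set.finite_coe_iff.mp this
  have hUfin : (⋃ lam ∈ Λ, {x : Fin n → ℤ | MvPolynomial.eval x Q = (lam:ℤ)}).Finite :=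
    Set.Finite.biUnion Λ.finite_toSet hfin
  obtain ⟨R, hR⟩ : ∃ R : ℕ, ∀ lam ∈ Λ, ∀ x : Fin n → ℤ,
      MvPolynomial.eval x Q = (lam:ℤ) → ∀ i, (x i).natAbs ≤ R := by
    refine ⟨hUfin.toFinset.sup (fun x => Finset.univ.sup fun i => (x i).natAbs), ?_⟩
    intro lam hlam x hx i
    have hmem : x ∈ hUfin.toFinset := by
      rw [Set.Finite.mem_toFinset]
      exact Set.mem_biUnion hlam hx
    have h1 : (x i).natAbs ≤ Finset.univ.sup (fun j => (x j).natAbs) :=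
      Finset.le_sup (f := fun j => (x j).natAbs) (Finset.mem_univ i)
    have h2 := Finset.le_sup (f := fun x : Fin n → ℤ => Finset.univ.sup fun i => (x i).natAbs) hmem
    exact le_trans h1 h2
  refine ⟨q + 2 * R + 1, ?_⟩
  intro T hT
  set u : ℕ := T / q with hudef
  have hqu : 1 ≤ u := (Nat.one_le_div_iff hq0).mpr (by omega)
  have hRT : R ≤ T := by omega
  set s : ℝ := (n:ℝ)/k - 1 with hsdef
  set aR : ℝ := c / C₂ * ((q:ℝ)^(n-1))⁻¹ with haRdef
  have hq0R : (0:ℝ) < (q:ℝ) := by exact_mod_cast hq0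
  have haRpos : 0 < aR := by positivity
  set a : ℝ≥0∞ := ENNReal.ofReal aR with hadef
  have hqcast : (q:ℝ) ^ (-((n : ℝ) - 1)) = ((q:ℝ)^(n-1))⁻¹ := by
    rw [show ((n:ℝ) - 1) = ((n - 1 : ℕ) : ℝ) by rw [Nat.cast_sub (by omega)]; norm_num]
    rw [Real.rpow_neg (le_of_lt hq0R), Real.rpow_natCast]
  -- key pointwise estimate
  have key : ∀ y : Fin n → ℤ, (∀ i, (y i).natAbs ≤ T - R) →
      a ≤ ⨆ lam ∈ Λ, (‖sphAvg n (fun x => MvPolynomial.eval x Q) (lam:ℤ)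
          (boxInd n q T) y‖₊ : ℝ≥0∞) := by
    intro y hy
    obtain ⟨lam, hlamΛ, hcnt⟩ := hcover (fun i => ((y i : ZMod q)))
    have hlam1 : 1 ≤ lam := (hΛ lam hlamΛ).1
    have hrpos : 0 < Nat.card {x : Fin n → ℤ // MvPolynomial.eval x Q = (lam:ℤ)} :=
      (hΛ lam hlamΛ).2
    haveI hfinS : Finite {x : Fin n → ℤ // MvPolynomial.eval x Q = (lam:ℤ)} :=
      (Nat.card_pos_iff.mp hrpos).2
    haveI : Fintype {x : Fin n → ℤ // MvPolynomial.eval x Q = (lam:ℤ)} := Fintype.ofFinite _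
    set r : ℕ := Nat.card {x : Fin n → ℤ // MvPolynomial.eval x Q = (lam:ℤ)} with hrdef
    set P : {x : Fin n → ℤ // MvPolynomial.eval x Q = (lam:ℤ)} → Prop :=
      fun x => (∀ i, (q:ℤ) ∣ (y - x.val) i) ∧ (∀ i, |(y - x.val) i| ≤ (T:ℤ)) with hPdef
    have hsph : sphAvg n (fun x => MvPolynomial.eval x Q) (lam:ℤ) (boxInd n q T) y
        = (r:ℂ)⁻¹ * ((Finset.univ.filter P).card : ℂ) := by
      unfold sphAvg
      rw [tsum_fintype]
      congr 1
      rw [← Finset.sum_boole]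
      apply Finset.sum_congr rfl
      intro x _
      simp only [boxInd, hPdef]
    set m : ℕ := Nat.card {x : Fin n → ℤ // MvPolynomial.eval x Q = (lam:ℤ) ∧
      ∀ i, ((x i : ZMod q) = (y i : ZMod q))} with hmdef
    have hmle : m ≤ (Finset.univ.filter P).card := by
      rw [← Fintype.card_subtype, ← Nat.card_eq_fintype_card, hmdef]
      have hmap : ∀ (x : Fin n → ℤ) (hx1 : MvPolynomial.eval x Q = (lam:ℤ)),
          (∀ i, ((x i : ZMod q) = (y i : ZMod q))) → P ⟨x, hx1⟩ := by
        intro x hx1 hx2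
        constructor
        · intro i
          have h0 : (((y i - x i : ℤ)) : ZMod q) = 0 := by
            push_cast
            rw [hx2 i]
            ring
          have := (ZMod.intCast_zmod_eq_zero_iff_dvd _ q).mp h0
          simpa using this
        · intro i
          have h1 : (x i).natAbs ≤ R := hR lam hlamΛ x hx1 i
          have h2 : (y i).natAbs ≤ T - R := hy i
          have h4 : (y i).natAbs + (x i).natAbs ≤ T := by
            calc (y i).natAbs + (x i).natAbs ≤ (T - R) + R := Nat.add_le_add h2 h1
              _ = T := Nat.sub_add_cancel hRT
          have h3 : (y i - x i).natAbs ≤ T := le_trans (Int.natAbs_sub_le (y i) (x i)) h4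
          have : |(y i - x i)| ≤ (T:ℤ) := by
            rw [Int.abs_eq_natAbs]
            exact_mod_cast h3
          simpa using this
      exact Nat.card_le_card_of_injective
        (fun z : {x : Fin n → ℤ // MvPolynomial.eval x Q = (lam:ℤ) ∧
            ∀ i, ((x i : ZMod q) = (y i : ZMod q))} =>
          (⟨⟨z.val, z.prop.1⟩, hmap z.val z.prop.1 z.prop.2⟩ :
            {z' : {x : Fin n → ℤ // MvPolynomial.eval x Q = (lam:ℤ)} // P z'}))
        (by intro x₁ x₂ h
            ext : 1
            exact congrArg (fun z => z.val.val) h)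
    have hL : 0 < (lam:ℝ) ^ s := Real.rpow_pos_of_pos (by exact_mod_cast hlam1) s
    have hnorm : aR ≤ ‖sphAvg n (fun x => MvPolynomial.eval x Q) (lam:ℤ) (boxInd n q T) y‖ := by
      rw [hsph, norm_mul, norm_inv, Complex.norm_natCast, Complex.norm_natCast]
      have hr_le : (r:ℝ) ≤ C₂ * (lam:ℝ)^s := by
        refine le_trans (hcount lam hlam1) ?_
        have : C₁ ≤ C₂ := le_max_left _ _
        nlinarith
      have hF : c * ((q:ℝ)^(n-1))⁻¹ * (lam:ℝ)^s ≤ ((Finset.univ.filter P).card : ℝ) := by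
        rw [← hqcast]
        exact le_trans hcnt (by exact_mod_cast hmle)
      have hrpos' : (0:ℝ) < r := by exact_mod_cast hrpos
      calc aR = (C₂ * (lam:ℝ)^s)⁻¹ * (c * ((q:ℝ)^(n-1))⁻¹ * (lam:ℝ)^s) := by
            rw [haRdef]
            field_simp
        _ ≤ (r:ℝ)⁻¹ * ((Finset.univ.filter P).card : ℝ) := by
            apply mul_le_mul (inv_anti₀ hrpos' hr_le) hF (by positivity)
              (by positivity)
    refine le_trans ?_ (le_biSup _ hlamΛ)
    rw [hadef, ← ENNReal.ofReal_coe_nnreal, coe_nnnorm]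
    exact ENNReal.ofReal_le_ofReal hnorm
  -- facts about u before anything else
  have hqT : q ≤ T := by omega
  have hqumul : q * u ≤ T := by
    rw [hudef, mul_comm]
    exact Nat.div_mul_le_self T q
  -- support finset
  set Fsupp : Finset (Fin n → ℤ) :=
    Fintype.piFinset fun _ => (Finset.Icc (-(u:ℤ)) (u:ℤ)).image (fun m => (q:ℤ) * m) with hFsupp
  have hsupp : ∀ y : Fin n → ℤ, boxInd n q T y ≠ 0 → y ∈ Fsupp := by
    intro y hy
    have hcond : (∀ i, (q:ℤ) ∣ y i) ∧ (∀ i, |y i| ≤ (T:ℤ)) := by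
      by_contra h
      exact hy (by simp only [boxInd, if_neg h])
    rw [hFsupp, Fintype.mem_piFinset]
    intro i
    obtain ⟨m, hm⟩ := hcond.1 i
    have hyabs : (y i).natAbs ≤ T := by
      have := hcond.2 i
      rw [Int.abs_eq_natAbs] at this
      exact_mod_cast this
    have hmabs : m.natAbs ≤ u := by
      have h1 : (y i).natAbs = q * m.natAbs := by rw [hm, Int.natAbs_mul]; simp
      have h2 : m.natAbs * q ≤ T := by rw [mul_comm, ← h1]; exact hyabs
      rw [hudef]
      exact (Nat.le_div_iff_mul_le hq0).mpr h2
    have hmabs' : |m| ≤ (u:ℤ) := by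
      rw [Int.abs_eq_natAbs]
      exact_mod_cast hmabs
    exact Finset.mem_image.mpr ⟨m, Finset.mem_Icc.mpr (abs_le.mp hmabs'), hm.symm⟩
  have hcardsupp : Fsupp.card ≤ (2*u+1)^n := by
    rw [hFsupp, Fintype.card_piFinset]
    calc ∏ _i : Fin n, ((Finset.Icc (-(u:ℤ)) (u:ℤ)).image (fun m => (q:ℤ) * m)).card
        ≤ ∏ _i : Fin n, (2*u+1) := by
          apply Finset.prod_le_prod'
          intro i _
          refine le_trans Finset.card_image_le ?_
          rw [Int.card_Icc]
          have : (u:ℤ) + 1 - (-(u:ℤ)) = ((2*u+1 : ℕ) : ℤ) := by push_cast; ring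
          rw [this, Int.toNat_natCast]
      _ = (2*u+1)^n := by simp
  -- lp norm upper bound
  have hone : ∀ y, (‖boxInd n q T y‖₊ : ℝ≥0∞) ^ p ≤ 1 := by
    intro y
    refine ENNReal.rpow_le_one ?_ (le_of_lt hppos)
    rw [← ENNReal.ofReal_coe_nnreal, coe_nnnorm]
    refine ENNReal.ofReal_le_one.mpr ?_
    simp only [boxInd]
    split <;> simp
  have hzero : ∀ y ∉ Fsupp, (‖boxInd n q T y‖₊ : ℝ≥0∞) ^ p = 0 := by
    intro y hy
    have h0 : boxInd n q T y = 0 := by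
      by_contra h
      exact hy (hsupp y h)
    rw [h0]
    simp only [nnnorm_zero, ENNReal.coe_zero]
    exact ENNReal.zero_rpow_of_pos hppos
  have hlp : lpNormZ n p (boxInd n q T) ≤ ((((2*u+1)^n : ℕ)) : ℝ≥0∞) ^ (1/p) := by
    unfold lpNormZ
    refine ENNReal.rpow_le_rpow ?_ (by positivity)
    rw [tsum_eq_sum hzero]
    calc ∑ y ∈ Fsupp, (‖boxInd n q T y‖₊ : ℝ≥0∞) ^ p ≤ ∑ _y ∈ Fsupp, 1 :=
          Finset.sum_le_sum fun y _ => hone y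
      _ = (Fsupp.card : ℝ≥0∞) := by simp
      _ ≤ _ := by exact_mod_cast hcardsupp
  -- box finset for the lower bound
  set A : ℕ := T - R with hAdef
  have hTA : T ≤ 2*A+1 := by omega
  set Fbox : Finset (Fin n → ℤ) :=
    Fintype.piFinset fun _ => Finset.Icc (-(A:ℤ)) (A:ℤ) with hFbox
  have hcardbox : (T^n : ℕ) ≤ Fbox.card := by
    rw [hFbox, Fintype.card_piFinset]
    calc (T^n : ℕ) = ∏ _i : Fin n, T := by simp
      _ ≤ ∏ _i : Fin n, (Finset.Icc (-(A:ℤ)) (A:ℤ)).card := by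
          apply Finset.prod_le_prod'
          intro i _
          rw [Int.card_Icc]
          have : (A:ℤ) + 1 - (-(A:ℤ)) = ((2*A+1 : ℕ) : ℤ) := by push_cast; ring
          rw [this, Int.toNat_natCast]
          exact hTA
  have hrhs1 : (Fbox.card : ℝ≥0∞) * a ^ p ≤
      ∑' y : Fin n → ℤ, (⨆ lam ∈ Λ, (‖sphAvg n (fun x => MvPolynomial.eval x Q) (lam:ℤ)
          (boxInd n q T) y‖₊ : ℝ≥0∞)) ^ p := by
    calc (Fbox.card : ℝ≥0∞) * a ^ p = ∑ _y ∈ Fbox, a ^ p := by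
          rw [Finset.sum_const, nsmul_eq_mul]
      _ ≤ ∑ y ∈ Fbox, (⨆ lam ∈ Λ, (‖sphAvg n (fun x => MvPolynomial.eval x Q) (lam:ℤ)
            (boxInd n q T) y‖₊ : ℝ≥0∞)) ^ p := by
          refine Finset.sum_le_sum fun y hy => ?_
          refine ENNReal.rpow_le_rpow (key y ?_) (le_of_lt hppos)
          intro i
          have h1 := (Fintype.mem_piFinset.mp hy) i
          rw [Finset.mem_Icc] at h1
          have h2 : |y i| ≤ (A:ℤ) := abs_le.mpr h1
          rw [Int.abs_eq_natAbs] at h2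
          rw [hAdef] at h2 ⊢
          exact_mod_cast h2
      _ ≤ _ := ENNReal.sum_le_tsum Fbox
  -- ENNReal algebra
  have hqE0 : (q:ℝ≥0∞) ≠ 0 := Nat.cast_ne_zero.mpr (by omega)
  have hqEtop : (q:ℝ≥0∞) ≠ ⊤ := ENNReal.natCast_ne_top q
  have hncast : ((n:ℝ) - 1) = ((n-1:ℕ):ℝ) := by rw [Nat.cast_sub (by omega)]; norm_num
  have hsplit : (q : ℝ≥0∞) ^ ((n : ℝ) / p - ((n : ℝ) - 1))
      = (q:ℝ≥0∞) ^ ((n:ℝ)/p) * ((q:ℝ≥0∞) ^ (n-1 : ℕ))⁻¹ := by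
    rw [sub_eq_add_neg, ENNReal.rpow_add _ _ hqE0 hqEtop, ENNReal.rpow_neg]
    congr 2
    rw [hncast, ENNReal.rpow_natCast]
  have haeq : a = ENNReal.ofReal (c / C₂) * ((q:ℝ≥0∞) ^ (n-1:ℕ))⁻¹ := by
    rw [hadef, haRdef, ENNReal.ofReal_mul (by positivity)]
    congr 1
    rw [ENNReal.ofReal_inv_of_pos (by positivity), ENNReal.ofReal_pow (by positivity),
      ENNReal.ofReal_natCast]
  have hc'eq : (((c / (C₂ * 3 ^ n)).toNNReal : ℝ≥0∞)) = ENNReal.ofReal (c / (C₂ * 3 ^ n)) := rfl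
  have hcore : (((c / (C₂ * 3 ^ n)).toNNReal : ℝ≥0∞)) * ((q:ℝ≥0∞)^((n:ℝ)/p) *
        (((((2*u+1)^n : ℕ)) : ℝ≥0∞)) ^ (1/p))
      ≤ (Fbox.card : ℝ≥0∞)^(1/p) * ENNReal.ofReal (c / C₂) := by
    have h1 : (q:ℝ≥0∞)^((n:ℝ)/p) * (((((2*u+1)^n : ℕ)) : ℝ≥0∞)) ^ (1/p)
        = (((q^n * (2*u+1)^n : ℕ)) : ℝ≥0∞)^(1/p) := by
      rw [Nat.cast_mul, ENNReal.mul_rpow_of_nonneg _ _ (by positivity)]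
      congr 1
      rw [Nat.cast_pow, ← ENNReal.rpow_natCast ((q:ℝ≥0∞)) n, ← ENNReal.rpow_mul, mul_one_div]
    have h2 : ((q^n * (2*u+1)^n : ℕ) : ℝ≥0∞) ≤ (((3*T)^n : ℕ) : ℝ≥0∞) := by
      refine Nat.cast_le.mpr ?_
      rw [← mul_pow]
      apply Nat.pow_le_pow_left
      calc q*(2*u+1) = 2*(q*u) + q := by ring
        _ ≤ 2*T + T := by omega
        _ = 3*T := by ring
    have h3 : ((((3*T)^n : ℕ)) : ℝ≥0∞)^(1/p) = (3:ℝ≥0∞)^((n:ℝ)/p) * ((T:ℝ≥0∞))^((n:ℝ)/p) := by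
      rw [Nat.cast_pow, Nat.cast_mul]
      rw [show (((3:ℕ)):ℝ≥0∞) = (3:ℝ≥0∞) by norm_num]
      rw [← ENNReal.rpow_natCast ((3:ℝ≥0∞) * (T:ℝ≥0∞)) n, ← ENNReal.rpow_mul, mul_one_div,
        ENNReal.mul_rpow_of_nonneg _ _ (by positivity)]
    have h4 : (((T^n : ℕ)) : ℝ≥0∞)^(1/p) = ((T:ℝ≥0∞))^((n:ℝ)/p) := by
      rw [Nat.cast_pow, ← ENNReal.rpow_natCast ((T:ℝ≥0∞)) n, ← ENNReal.rpow_mul, mul_one_div]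
    have h5 : (((c / (C₂ * 3 ^ n)).toNNReal : ℝ≥0∞)) * (3:ℝ≥0∞)^((n:ℝ)/p)
        ≤ ENNReal.ofReal (c / C₂) := by
      refine le_trans (mul_le_mul_right (ENNReal.rpow_le_rpow_of_exponent_le (by norm_num)
        (div_le_self (by positivity) hp)) _) ?_
      rw [ENNReal.rpow_natCast, hc'eq]
      rw [show (3:ℝ≥0∞)^n = ENNReal.ofReal ((3:ℝ)^n) by
        rw [ENNReal.ofReal_pow (by norm_num), ENNReal.ofReal_ofNat]]
      rw [← ENNReal.ofReal_mul (le_of_lt hc'pos)]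
      refine le_of_eq (congrArg _ ?_)
      field_simp
    calc (((c / (C₂ * 3 ^ n)).toNNReal : ℝ≥0∞)) * ((q:ℝ≥0∞)^((n:ℝ)/p) *
          (((((2*u+1)^n : ℕ)) : ℝ≥0∞)) ^ (1/p))
        = (((c / (C₂ * 3 ^ n)).toNNReal : ℝ≥0∞)) * (((q^n * (2*u+1)^n : ℕ)) : ℝ≥0∞)^(1/p) := by
          rw [h1]
      _ ≤ (((c / (C₂ * 3 ^ n)).toNNReal : ℝ≥0∞)) * ((((3*T)^n : ℕ)) : ℝ≥0∞)^(1/p) :=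
          mul_le_mul_right (ENNReal.rpow_le_rpow h2 (by positivity)) _
      _ = ((((c / (C₂ * 3 ^ n)).toNNReal : ℝ≥0∞)) * (3:ℝ≥0∞)^((n:ℝ)/p)) * ((T:ℝ≥0∞))^((n:ℝ)/p) := by
          rw [h3]; ring
      _ ≤ ENNReal.ofReal (c / C₂) * ((T:ℝ≥0∞))^((n:ℝ)/p) :=
          mul_le_mul_left h5 _
      _ = (((T^n : ℕ)) : ℝ≥0∞)^(1/p) * ENNReal.ofReal (c / C₂) := by
          rw [h4]; ring
      _ ≤ (Fbox.card : ℝ≥0∞)^(1/p) * ENNReal.ofReal (c / C₂) :=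
          mul_le_mul_left (ENNReal.rpow_le_rpow (Nat.cast_le.mpr hcardbox) (by positivity)) _
  -- put everything together
  have hfinal1 : (Fbox.card : ℝ≥0∞)^(1/p) * a ≤
      (∑' y : Fin n → ℤ, (⨆ lam ∈ Λ, (‖sphAvg n (fun x => MvPolynomial.eval x Q) (lam:ℤ)
          (boxInd n q T) y‖₊ : ℝ≥0∞)) ^ p) ^ (1/p) := by
    have heq : (Fbox.card : ℝ≥0∞)^(1/p) * a = ((Fbox.card : ℝ≥0∞) * a^p)^(1/p) := by
      rw [ENNReal.mul_rpow_of_nonneg _ _ (by positivity), ← ENNReal.rpow_mul,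
        mul_one_div_cancel (ne_of_gt hppos), ENNReal.rpow_one]
    rw [heq]
    exact ENNReal.rpow_le_rpow hrhs1 (by positivity)
  calc (((c / (C₂ * 3 ^ n)).toNNReal : ℝ≥0∞)) * (q : ℝ≥0∞) ^ ((n : ℝ) / p - ((n : ℝ) - 1)) *
        lpNormZ n p (boxInd n q T)
      ≤ (((c / (C₂ * 3 ^ n)).toNNReal : ℝ≥0∞)) * (q : ℝ≥0∞) ^ ((n : ℝ) / p - ((n : ℝ) - 1)) *
        ((((2*u+1)^n : ℕ)) : ℝ≥0∞) ^ (1/p) := mul_le_mul_right hlp _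
    _ = ((((c / (C₂ * 3 ^ n)).toNNReal : ℝ≥0∞)) * ((q:ℝ≥0∞)^((n:ℝ)/p) *
          (((((2*u+1)^n : ℕ)) : ℝ≥0∞)) ^ (1/p))) * ((q:ℝ≥0∞) ^ (n-1 : ℕ))⁻¹ := by
        rw [hsplit]; ring
    _ ≤ ((Fbox.card : ℝ≥0∞)^(1/p) * ENNReal.ofReal (c / C₂)) * ((q:ℝ≥0∞) ^ (n-1 : ℕ))⁻¹ :=
        mul_le_mul_left hcore _
    _ = (Fbox.card : ℝ≥0∞)^(1/p) * a := by rw [haeq]; ring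
    _ ≤ _ := hfinal1
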